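/- arXiv:1201.6634 — 3 statements merged into one kernel-verified Lean document; each statement's English description precedes it below -/
import Mathlib

section
/- Let ξ₁, …, ξ_k be independent ℝ^d-valued random variables, where ξ_j has the multivariate Gaussian distribution with mean vector μ_j ∈ ℝ^d and common positive definite covariance matrix Σ. Set Ξ = ξ₁ξ₁ᵀ + ⋯ + ξ_kξ_kᵀ, ω = μ₁μ₁ᵀ + ⋯ + μ_kμ_kᵀ and σ = 2Σ. Then for every positive semidefinite real symmetric d×d matrix u, E[exp(-tr(u Ξ))] = det(I + σu)^{-k/2} · exp(-tr(u (I + σu)^{-1} ω)). -/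
open MeasureTheory ProbabilityTheory Matrix

/-- The multivariate Gaussian distribution on `ℝ^d` with mean vector `m` and (positive
definite) covariance matrix `S`, given by its Lebesgue density
`(2π)^(-d/2) (det S)^(-1/2) exp (-(x-m)ᵀ S⁻¹ (x-m) / 2)`. -/
noncomputable def mvGaussian {d : ℕ} (m : Fin d → ℝ) (S : Matrix (Fin d) (Fin d) ℝ) :
    Measure (Fin d → ℝ) :=
  volume.withDensity fun x => ENNReal.ofReal
    ((2 * Real.pi) ^ (-(d : ℝ) / 2) * S.det ^ (-(1 : ℝ) / 2) *
      Real.exp (-((x - m) ⬝ᵥ (S⁻¹ *ᵥ (x - m))) / 2))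

section Aux
open Real
open scoped NNReal ENNReal

lemma trace_mul_vecMulVec {d : ℕ} (u : Matrix (Fin d) (Fin d) ℝ) (v : Fin d → ℝ) :
    (u * vecMulVec v v).trace = v ⬝ᵥ u *ᵥ v := by
  simp only [Matrix.trace, Matrix.diag, Matrix.mul_apply, vecMulVec_apply, dotProduct,
    Matrix.mulVec, dotProduct]
  congr 1; ext i; rw [Finset.mul_sum]; congr 1; ext j; ring

lemma gauss_pi (d : ℕ) : ∫ x : Fin d → ℝ, Real.exp (-∑ i, x i ^ 2) = π ^ ((d : ℝ) / 2) := by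
  have h0 : ∀ x : Fin d → ℝ, Real.exp (-∑ i, x i ^ 2) = ∏ i, Real.exp (-(x i) ^ 2) := by
    intro x; rw [← Real.exp_sum]; congr 1; rw [← Finset.sum_neg_distrib]
  simp_rw [h0]
  rw [volume_pi, integral_fintype_prod_eq_pow (ι := Fin d) (fun t : ℝ => Real.exp (-t ^ 2))]
  have h1 : ∫ t : ℝ, Real.exp (-t ^ 2) = Real.sqrt π := by
    simpa using integral_gaussian 1
  rw [h1, Fintype.card_fin, Real.sqrt_eq_rpow, ← Real.rpow_natCast (π ^ ((1:ℝ)/2)) d,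
    ← Real.rpow_mul Real.pi_nonneg]
  congr 1; ring

open scoped MatrixOrder in
lemma gauss_quad {d : ℕ} {A : Matrix (Fin d) (Fin d) ℝ} (hA : A.PosDef) :
    ∫ x : Fin d → ℝ, Real.exp (-(x ⬝ᵥ A *ᵥ x)) = π ^ ((d : ℝ) / 2) * A.det ^ (-(1:ℝ)/2) := by
  set C := CFC.sqrt A with hCdef
  have hC2 : C * C = A := CFC.sqrt_mul_sqrt_self A hA.posSemidef.nonneg
  have hCsym : Cᵀ = C := by
    have := (CFC.sqrt_nonneg A).posSemidef.1
    rwa [IsHermitian, conjTranspose_eq_transpose_of_trivial] at this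
  have hdetA : 0 < A.det := hA.det_pos
  have hdet2 : C.det * C.det = A.det := by rw [← det_mul, hC2]
  have hdetC : C.det ≠ 0 := by
    intro h; rw [h, mul_zero] at hdet2; exact hdetA.ne hdet2
  have hquad : ∀ x : Fin d → ℝ, x ⬝ᵥ A *ᵥ x = ∑ i, (C *ᵥ x) i ^ 2 := by
    intro x
    rw [← hC2, ← mulVec_mulVec, dotProduct_mulVec]
    rw [show x ᵥ* C = C *ᵥ x by conv_lhs => rw [← hCsym, vecMul_transpose]]
    simp [dotProduct, sq]
  simp_rw [hquad]
  have hcont : Continuous fun y : Fin d → ℝ => Real.exp (-∑ i, y i ^ 2) := by fun_prop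
  have hT : ∀ x, Matrix.toLin' C x = C *ᵥ x := fun x => Matrix.toLin'_apply C x
  have hmeasT : Measurable (Matrix.toLin' C) :=
    (LinearMap.continuous_of_finiteDimensional _).measurable
  calc ∫ x : Fin d → ℝ, Real.exp (-∑ i, (C *ᵥ x) i ^ 2)
      = ∫ y, Real.exp (-∑ i, y i ^ 2) ∂(Measure.map (Matrix.toLin' C) volume) := by
        rw [integral_map hmeasT.aemeasurable hcont.aestronglyMeasurable]
        simp_rw [hT]
    _ = (ENNReal.ofReal |C.det⁻¹|).toReal * ∫ y : Fin d → ℝ, Real.exp (-∑ i, y i ^ 2) := by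
        rw [Real.map_matrix_volume_pi_eq_smul_volume_pi hdetC, integral_smul_measure]
        simp [abs_inv]
    _ = π ^ ((d : ℝ) / 2) * A.det ^ (-(1:ℝ)/2) := by
        rw [gauss_pi, ENNReal.toReal_ofReal (abs_nonneg _)]
        rw [abs_inv, show |C.det| = Real.sqrt A.det by
          rw [← hdet2, ← Real.sqrt_mul_self_eq_abs]]
        rw [Real.sqrt_eq_rpow, ← Real.rpow_neg_one (A.det ^ ((1:ℝ)/2)), ← Real.rpow_mul hdetA.le]
        norm_num [mul_comm]

lemma gauss_quad_lin {d : ℕ} {A : Matrix (Fin d) (Fin d) ℝ} (hA : A.PosDef) (b : Fin d → ℝ) :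
    ∫ x : Fin d → ℝ, Real.exp (-(x ⬝ᵥ A *ᵥ x) + b ⬝ᵥ x) =
      π ^ ((d : ℝ) / 2) * A.det ^ (-(1:ℝ)/2) * Real.exp (b ⬝ᵥ A⁻¹ *ᵥ b / 4) := by
  have hAsym : Aᵀ = A := by
    have := hA.1; rwa [IsHermitian, conjTranspose_eq_transpose_of_trivial] at this
  have hdet : A.det ≠ 0 := hA.det_pos.ne'
  set c : Fin d → ℝ := (2⁻¹ : ℝ) • (A⁻¹ *ᵥ b) with hc
  have hAc : A *ᵥ c = (2⁻¹ : ℝ) • b := by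
    rw [hc, mulVec_smul, mulVec_mulVec, Matrix.mul_nonsing_inv _ hdet.isUnit, one_mulVec]
  have e1 : ∀ x, x ⬝ᵥ A *ᵥ c = b ⬝ᵥ x / 2 := by
    intro x; rw [hAc, dotProduct_smul, smul_eq_mul, dotProduct_comm]; ring
  have e2 : ∀ x, c ⬝ᵥ A *ᵥ x = b ⬝ᵥ x / 2 := by
    intro x
    rw [dotProduct_mulVec, show c ᵥ* A = (2⁻¹ : ℝ) • b by
      conv_lhs => rw [← hAsym, vecMul_transpose, hAc]]
    rw [smul_dotProduct, smul_eq_mul]; ring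
  have e3 : c ⬝ᵥ A *ᵥ c = b ⬝ᵥ A⁻¹ *ᵥ b / 4 := by
    rw [e1, hc, dotProduct_smul, smul_eq_mul]; ring
  have e4 : b ⬝ᵥ c = b ⬝ᵥ A⁻¹ *ᵥ b / 2 := by
    rw [hc, dotProduct_smul, smul_eq_mul]; ring
  have key : ∀ x : Fin d → ℝ,
      -((x + c) ⬝ᵥ A *ᵥ (x + c)) + b ⬝ᵥ (x + c) =
        (-(x ⬝ᵥ A *ᵥ x)) + b ⬝ᵥ A⁻¹ *ᵥ b / 4 := by
    intro x
    simp only [mulVec_add, dotProduct_add, add_dotProduct, e1, e2, e3, e4]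
    ring
  calc ∫ x : Fin d → ℝ, Real.exp (-(x ⬝ᵥ A *ᵥ x) + b ⬝ᵥ x)
      = ∫ x : Fin d → ℝ, Real.exp (-((x + c) ⬝ᵥ A *ᵥ (x + c)) + b ⬝ᵥ (x + c)) := by
        rw [integral_add_right_eq_self (fun x : Fin d → ℝ => Real.exp (-(x ⬝ᵥ A *ᵥ x) + b ⬝ᵥ x)) c]
    _ = ∫ x : Fin d → ℝ, Real.exp (-(x ⬝ᵥ A *ᵥ x)) * Real.exp (b ⬝ᵥ A⁻¹ *ᵥ b / 4) := by
        congr 1; ext x; rw [key x, Real.exp_add]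
    _ = π ^ ((d : ℝ) / 2) * A.det ^ (-(1:ℝ)/2) * Real.exp (b ⬝ᵥ A⁻¹ *ᵥ b / 4) := by
        rw [integral_mul_const, gauss_quad hA]

lemma posDef_smul {d : ℕ} {A : Matrix (Fin d) (Fin d) ℝ} (hA : A.PosDef) {c : ℝ} (hc : 0 < c) :
    (c • A).PosDef := by
  refine PosDef.of_dotProduct_mulVec_pos ?_ fun x hx => ?_
  · rw [IsHermitian, conjTranspose_smul, star_trivial, hA.1.eq]
  · rw [smul_mulVec, dotProduct_smul, smul_eq_mul]
    exact mul_pos hc (hA.dotProduct_mulVec_pos hx)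

lemma mvGaussian_exp_quad {d : ℕ} (m : Fin d → ℝ) {S u : Matrix (Fin d) (Fin d) ℝ}
    (hS : S.PosDef) (hu : u.PosSemidef) :
    ∫ x, Real.exp (-(x ⬝ᵥ u *ᵥ x)) ∂(mvGaussian m S) =
      (1 + ((2 : ℝ) • S) * u).det ^ (-(1:ℝ)/2) *
        Real.exp (-(m ⬝ᵥ (u * (1 + ((2 : ℝ) • S) * u)⁻¹) *ᵥ m)) := by
  -- notation and basic facts
  have hSdet : S.det ≠ 0 := hS.det_pos.ne'
  have hSisym : (S⁻¹)ᵀ = S⁻¹ := by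
    have := hS.inv.1; rwa [IsHermitian, conjTranspose_eq_transpose_of_trivial] at this
  have husym : uᵀ = u := by
    have := hu.1; rwa [IsHermitian, conjTranspose_eq_transpose_of_trivial] at this
  set B : Matrix (Fin d) (Fin d) ℝ := S⁻¹ + (2:ℝ) • u with hBdef
  have hB : B.PosDef := by
    refine hS.inv.add_posSemidef ?_
    have : (2:ℝ) • u = u + u := two_smul ℝ u
    rw [this]; exact hu.add hu
  have hBdet : B.det ≠ 0 := hB.det_pos.ne'
  set A : Matrix (Fin d) (Fin d) ℝ := (2⁻¹ : ℝ) • B with hAdef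
  have hA : A.PosDef := posDef_smul hB (by norm_num)
  set M : Matrix (Fin d) (Fin d) ℝ := 1 + ((2 : ℝ) • S) * u with hMdef
  have hSB : S * B = M := by
    rw [hBdef, hMdef, Matrix.mul_add, Matrix.mul_nonsing_inv _ hSdet.isUnit,
      mul_smul_comm, smul_mul_assoc]
  have hBS : B * S = 1 + (2:ℝ) • (u * S) := by
    rw [hBdef, Matrix.add_mul, Matrix.nonsing_inv_mul _ hSdet.isUnit, smul_mul_assoc]
  have hMdet : M.det = S.det * B.det := by rw [← hSB, det_mul]
  have hMdetpos : 0 < M.det := by rw [hMdet]; exact mul_pos hS.det_pos hB.det_pos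
  have hMdetne : M.det ≠ 0 := hMdetpos.ne'
  -- inverse of A
  have hAinv : A⁻¹ = (2:ℝ) • B⁻¹ := by
    apply Matrix.inv_eq_right_inv
    rw [hAdef, smul_mul_assoc, mul_smul_comm, Matrix.mul_nonsing_inv _ hBdet.isUnit,
      smul_smul]
    norm_num
  -- push-through identity : u * M⁻¹ = (B*S)⁻¹ * u
  have hNu : (B * S) * u = u * M := by
    rw [hBS, hMdef]
    simp only [Matrix.add_mul, Matrix.mul_add, Matrix.one_mul, Matrix.mul_one,
      smul_mul_assoc, mul_smul_comm, Matrix.mul_assoc]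
  have hpush : u * M⁻¹ = S⁻¹ * B⁻¹ * u := by
    have h1 : (S⁻¹ * B⁻¹) * ((B * S) * u) * M⁻¹ = (S⁻¹ * B⁻¹) * (u * M) * M⁻¹ := by rw [hNu]
    have h2 : (S⁻¹ * B⁻¹) * ((B * S) * u) = u := by
      rw [show (S⁻¹ * B⁻¹) * ((B * S) * u) = S⁻¹ * ((B⁻¹ * B) * S) * u by
        simp only [Matrix.mul_assoc],
        Matrix.nonsing_inv_mul _ hBdet.isUnit, Matrix.one_mul,
        Matrix.nonsing_inv_mul _ hSdet.isUnit, Matrix.one_mul]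
    rw [h2] at h1
    rw [h1, Matrix.mul_assoc (S⁻¹ * B⁻¹), Matrix.mul_assoc u,
      Matrix.mul_nonsing_inv _ hMdetne.isUnit, Matrix.mul_one]
  -- key matrix identity
  have hkey : S⁻¹ * B⁻¹ * S⁻¹ = S⁻¹ - (2:ℝ) • (u * M⁻¹) := by
    have h3 : B⁻¹ - S = -((2:ℝ) • (B⁻¹ * (u * S))) := by
      have h4 : B * (B⁻¹ - S) = -((2:ℝ) • (u * S)) := by
        rw [Matrix.mul_sub, Matrix.mul_nonsing_inv _ hBdet.isUnit, hBS]
        abel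
      have h5 : B⁻¹ * (B * (B⁻¹ - S)) = B⁻¹ - S := by
        rw [← Matrix.mul_assoc, Matrix.nonsing_inv_mul _ hBdet.isUnit, Matrix.one_mul]
      rw [← h5, h4, Matrix.mul_neg, mul_smul_comm]
    have h6 : S⁻¹ * (B⁻¹ - S) * S⁻¹ = S⁻¹ * B⁻¹ * S⁻¹ - S⁻¹ := by
      rw [Matrix.mul_sub, Matrix.sub_mul, Matrix.mul_assoc S⁻¹ S S⁻¹,
        Matrix.mul_nonsing_inv _ hSdet.isUnit, Matrix.mul_one]
    have h7 : S⁻¹ * (B⁻¹ - S) * S⁻¹ = -((2:ℝ) • (u * M⁻¹)) := by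
      rw [h3, hpush]
      rw [Matrix.mul_neg, Matrix.neg_mul, mul_smul_comm, smul_mul_assoc]
      congr 2
      rw [show S⁻¹ * (B⁻¹ * (u * S)) * S⁻¹ = (S⁻¹ * B⁻¹ * u) * (S * S⁻¹) by
        simp only [Matrix.mul_assoc], Matrix.mul_nonsing_inv _ hSdet.isUnit, Matrix.mul_one]
    have h8 := h6.symm.trans h7
    rw [sub_eq_iff_eq_add] at h8
    rw [h8]; abel
  -- unfold the Gaussian integral
  rw [mvGaussian]
  rw [show (fun x : Fin d → ℝ => ENNReal.ofReal
      ((2 * Real.pi) ^ (-(d : ℝ) / 2) * S.det ^ (-(1 : ℝ) / 2) *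
        Real.exp (-((x - m) ⬝ᵥ (S⁻¹ *ᵥ (x - m))) / 2))) =
      (fun x : Fin d → ℝ => ((Real.toNNReal
      ((2 * Real.pi) ^ (-(d : ℝ) / 2) * S.det ^ (-(1 : ℝ) / 2) *
        Real.exp (-((x - m) ⬝ᵥ (S⁻¹ *ᵥ (x - m))) / 2)) : ℝ≥0) : ℝ≥0∞)) from rfl]
  have hρmeas : Measurable fun x : Fin d → ℝ => Real.toNNReal
      ((2 * Real.pi) ^ (-(d : ℝ) / 2) * S.det ^ (-(1 : ℝ) / 2) *
        Real.exp (-((x - m) ⬝ᵥ (S⁻¹ *ᵥ (x - m))) / 2)) := by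
    apply Measurable.real_toNNReal
    apply Measurable.mul measurable_const
    apply Measurable.exp
    apply Measurable.div _ measurable_const
    apply Measurable.neg
    simp only [dotProduct, Matrix.mulVec]
    exact Finset.measurable_sum _ fun i _ => by
      exact ((measurable_pi_apply i).sub measurable_const).mul
        (Finset.measurable_sum _ fun j _ => ((measurable_pi_apply j).sub
          measurable_const).const_mul _)
  rw [integral_withDensity_eq_integral_smul hρmeas]
  set K : ℝ := (2 * Real.pi) ^ (-(d : ℝ) / 2) * S.det ^ (-(1 : ℝ) / 2) with hKdef
  have hKpos : 0 < K :=
    mul_pos (Real.rpow_pos_of_pos (by positivity) _) (Real.rpow_pos_of_pos hS.det_pos _)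
  -- pointwise identity of the integrand
  have hpt : ∀ x : Fin d → ℝ,
      (Real.toNNReal (K * Real.exp (-((x - m) ⬝ᵥ (S⁻¹ *ᵥ (x - m))) / 2)) : ℝ)
        • Real.exp (-(x ⬝ᵥ u *ᵥ x)) =
      (K * Real.exp (-(m ⬝ᵥ S⁻¹ *ᵥ m) / 2)) *
        Real.exp (-(x ⬝ᵥ A *ᵥ x) + (S⁻¹ *ᵥ m) ⬝ᵥ x) := by
    intro x
    have em1 : m ⬝ᵥ S⁻¹ *ᵥ x = (S⁻¹ *ᵥ m) ⬝ᵥ x := by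
      rw [dotProduct_mulVec]
      congr 1
      conv_lhs => rw [← hSisym, vecMul_transpose]
    have em2 : x ⬝ᵥ S⁻¹ *ᵥ m = (S⁻¹ *ᵥ m) ⬝ᵥ x := dotProduct_comm _ _
    have eA : x ⬝ᵥ A *ᵥ x = 2⁻¹ * (x ⬝ᵥ S⁻¹ *ᵥ x) + x ⬝ᵥ u *ᵥ x := by
      rw [hAdef, hBdef, smul_mulVec, dotProduct_smul, smul_eq_mul, add_mulVec,
        dotProduct_add, smul_mulVec, dotProduct_smul, smul_eq_mul]
      ring
    have hq : -((x - m) ⬝ᵥ (S⁻¹ *ᵥ (x - m))) / 2 + -(x ⬝ᵥ u *ᵥ x) =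
        -(m ⬝ᵥ S⁻¹ *ᵥ m) / 2 + (-(x ⬝ᵥ A *ᵥ x) + (S⁻¹ *ᵥ m) ⬝ᵥ x) := by
      simp only [Matrix.mulVec_sub, dotProduct_sub, sub_dotProduct, em1, em2, eA]
      ring
    rw [smul_eq_mul, Real.coe_toNNReal _ (by positivity), mul_assoc K, ← Real.exp_add,
      mul_assoc K, ← Real.exp_add, hq]
  simp only [NNReal.smul_def]
  simp_rw [hpt]
  rw [integral_const_mul, gauss_quad_lin hA]
  -- exponent identity
  have hbB : (S⁻¹ *ᵥ m) ⬝ᵥ A⁻¹ *ᵥ (S⁻¹ *ᵥ m) =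
      2 * (m ⬝ᵥ (S⁻¹ * B⁻¹ * S⁻¹) *ᵥ m) := by
    rw [hAinv, smul_mulVec, dotProduct_smul, smul_eq_mul]
    congr 1
    nth_rewrite 1 [show S⁻¹ *ᵥ m = m ᵥ* S⁻¹ by conv_rhs => rw [← hSisym, vecMul_transpose]]
    rw [← dotProduct_mulVec, mulVec_mulVec, mulVec_mulVec, Matrix.mul_assoc]
  have hexp : -(m ⬝ᵥ S⁻¹ *ᵥ m) / 2 + (S⁻¹ *ᵥ m) ⬝ᵥ A⁻¹ *ᵥ (S⁻¹ *ᵥ m) / 4 =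
      -(m ⬝ᵥ (u * M⁻¹) *ᵥ m) := by
    rw [hbB, hkey, sub_mulVec, dotProduct_sub, smul_mulVec, dotProduct_smul, smul_eq_mul]
    ring
  -- determinant identity
  have hdetA : A.det = (2:ℝ) ^ (-(d:ℝ)) * B.det := by
    rw [hAdef, det_smul, Fintype.card_fin]
    congr 1
    rw [Real.rpow_neg (by norm_num : (0:ℝ) ≤ 2), Real.rpow_natCast, ← inv_pow]
  have hdetpart : K * (π ^ ((d:ℝ)/2) * A.det ^ (-(1:ℝ)/2)) = M.det ^ (-(1:ℝ)/2) := by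
    rw [hKdef, hdetA, hMdet]
    rw [Real.mul_rpow (by positivity) hB.det_pos.le,
      Real.mul_rpow (by norm_num) Real.pi_pos.le,
      ← Real.rpow_mul (by norm_num : (0:ℝ) ≤ 2)]
    rw [show -(d:ℝ) * (-(1:ℝ)/2) = (d:ℝ)/2 by ring]
    have hpi : π ^ (-(d:ℝ)/2) * π ^ ((d:ℝ)/2) = 1 := by
      rw [← Real.rpow_add Real.pi_pos, show -(d:ℝ)/2 + (d:ℝ)/2 = 0 by ring, Real.rpow_zero]
    have h2 : (2:ℝ) ^ (-(d:ℝ)/2) * (2:ℝ) ^ ((d:ℝ)/2) = 1 := by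
      rw [← Real.rpow_add (by norm_num : (0:ℝ) < 2), show -(d:ℝ)/2 + (d:ℝ)/2 = 0 by ring,
        Real.rpow_zero]
    calc (2:ℝ) ^ (-(d:ℝ)/2) * π ^ (-(d:ℝ)/2) * S.det ^ (-(1:ℝ)/2) *
          (π ^ ((d:ℝ)/2) * ((2:ℝ) ^ ((d:ℝ)/2) * B.det ^ (-(1:ℝ)/2)))
        = ((2:ℝ) ^ (-(d:ℝ)/2) * (2:ℝ) ^ ((d:ℝ)/2)) * (π ^ (-(d:ℝ)/2) * π ^ ((d:ℝ)/2)) *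
          (S.det ^ (-(1:ℝ)/2) * B.det ^ (-(1:ℝ)/2)) := by ring
      _ = S.det ^ (-(1:ℝ)/2) * B.det ^ (-(1:ℝ)/2) := by rw [hpi, h2]; ring
      _ = (S.det * B.det) ^ (-(1:ℝ)/2) := (Real.mul_rpow hS.det_pos.le hB.det_pos.le).symm
  rw [mul_mul_mul_comm, hdetpart, ← Real.exp_add, hexp]

lemma mvGaussian_det_pos {d : ℕ} {S u : Matrix (Fin d) (Fin d) ℝ}
    (hS : S.PosDef) (hu : u.PosSemidef) : 0 < (1 + ((2 : ℝ) • S) * u).det := by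
  have hB : (S⁻¹ + (2:ℝ) • u).PosDef := by
    refine hS.inv.add_posSemidef ?_
    rw [show (2:ℝ) • u = u + u from two_smul ℝ u]; exact hu.add hu
  have hSB : S * (S⁻¹ + (2:ℝ) • u) = 1 + ((2 : ℝ) • S) * u := by
    rw [Matrix.mul_add, Matrix.mul_nonsing_inv _ hS.det_pos.ne'.isUnit,
      mul_smul_comm, smul_mul_assoc]
  rw [← hSB, det_mul]
  exact mul_pos hS.det_pos hB.det_pos

lemma indep_prod_integral {Ω : Type*} [MeasurableSpace Ω] (P : Measure Ω)
    [IsProbabilityMeasure P] {k : ℕ} (g : Fin k → Ω → ℝ)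
    (hindep : iIndepFun g P)
    (hmeas : ∀ j, Measurable (g j)) (hbd : ∀ j a, g j a ∈ Set.Icc (0:ℝ) 1)
    (s : Finset (Fin k)) : ∫ a, ∏ j ∈ s, g j a ∂P = ∏ j ∈ s, ∫ a, g j a ∂P := by
  have hint : ∀ f : Ω → ℝ, Measurable f → (∀ a, f a ∈ Set.Icc (0:ℝ) 1) → Integrable f P := by
    intro f hf hb
    refine Integrable.mono' (integrable_const (1:ℝ)) hf.aestronglyMeasurable ?_
    filter_upwards with a
    rw [Real.norm_eq_abs, abs_le]
    exact ⟨by linarith [(hb a).1], (hb a).2⟩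
  induction s using Finset.cons_induction with
  | empty => simp
  | cons i s his ih =>
    simp only [Finset.prod_cons]
    have hprodmeas : Measurable fun a => ∏ j ∈ s, g j a :=
      Finset.measurable_prod _ fun j _ => hmeas j
    have hprodbd : ∀ a, (∏ j ∈ s, g j a) ∈ Set.Icc (0:ℝ) 1 := by
      intro a
      constructor
      · exact Finset.prod_nonneg fun j _ => (hbd j a).1
      · exact Finset.prod_le_one (fun j _ => (hbd j a).1) (fun j _ => (hbd j a).2)
    have hIndep : IndepFun (g i) (∏ j ∈ s, g j) P :=
      (hindep.indepFun_finset_prod_of_notMem hmeas his).symm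
    have heq : (∏ j ∈ s, g j) = fun a => ∏ j ∈ s, g j a := by
      ext a; rw [Finset.prod_apply]
    have hintprod : Integrable (∏ j ∈ s, g j) P := by
      rw [heq]; exact hint _ hprodmeas hprodbd
    have key := IndepFun.integral_mul_eq_mul_integral hIndep
      (hint _ (hmeas i) (hbd i)).aestronglyMeasurable hintprod.aestronglyMeasurable
    rw [heq] at key
    calc ∫ a, g i a * ∏ j ∈ s, g j a ∂P
        = ∫ a, (g i * fun a => ∏ j ∈ s, g j a) a ∂P := by
          simp only [Pi.mul_apply]
      _ = (∫ a, g i a ∂P) * ∫ a, ∏ j ∈ s, g j a ∂P := key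
      _ = (∫ a, g i a ∂P) * ∏ j ∈ s, ∫ a, g j a ∂P := by rw [ih]

end Aux

open Real in
/-- If `ξ 1, …, ξ k` are independent `ℝ^d`-valued Gaussian random vectors with
mean vectors `m j` and common positive definite covariance matrix `S`,
`Ξ = ∑ j, ξ j (ξ j)ᵀ`, `ω = ∑ j, m j (m j)ᵀ` and `σ = 2 S`, then for every positive
semidefinite `u`, `E[exp (-tr (u Ξ))] = det (I + σ u)^(-k/2) * exp (-tr (u (I + σ u)⁻¹ ω))`. -/
theorem sum_outer_squares_gaussian_laplace_transform
    {Ω : Type*} [MeasurableSpace Ω] (P : Measure Ω) [IsProbabilityMeasure P]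
    (d k : ℕ) (ξ : Fin k → Ω → (Fin d → ℝ)) (m : Fin k → (Fin d → ℝ))
    (S : Matrix (Fin d) (Fin d) ℝ) (hS : S.PosDef)
    (hmeas : ∀ j, Measurable (ξ j))
    (hindep : iIndepFun ξ P)
    (hlaw : ∀ j, P.map (ξ j) = mvGaussian (m j) S)
    (u : Matrix (Fin d) (Fin d) ℝ) (hu : u.PosSemidef) :
    ∫ a, Real.exp (-(u * ∑ j, vecMulVec (ξ j a) (ξ j a)).trace) ∂P =
      (1 + ((2 : ℝ) • S) * u).det ^ (-(k : ℝ) / 2) *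
        Real.exp (-(u * (1 + ((2 : ℝ) • S) * u)⁻¹ * ∑ j, vecMulVec (m j) (m j)).trace) := by
  have hMdetpos : 0 < (1 + ((2 : ℝ) • S) * u).det := mvGaussian_det_pos hS hu
  set φ : (Fin d → ℝ) → ℝ := fun x => Real.exp (-(x ⬝ᵥ u *ᵥ x)) with hφdef
  have hφmeas : Measurable φ := by
    apply Measurable.exp
    apply Measurable.neg
    simp only [dotProduct, Matrix.mulVec]
    exact Finset.measurable_sum _ fun i _ => (measurable_pi_apply i).mul
      (Finset.measurable_sum _ fun j _ => (measurable_pi_apply j).const_mul _)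
  have hφbd : ∀ x, φ x ∈ Set.Icc (0:ℝ) 1 := by
    intro x
    refine ⟨(Real.exp_pos _).le, Real.exp_le_one_iff.mpr ?_⟩
    rw [neg_nonpos]
    have := hu.dotProduct_mulVec_nonneg x
    rwa [star_trivial] at this
  have htr1 : ∀ a, (u * ∑ j, vecMulVec (ξ j a) (ξ j a)).trace
      = ∑ j, (ξ j a) ⬝ᵥ u *ᵥ (ξ j a) := by
    intro a
    rw [Matrix.mul_sum, Matrix.trace_sum]
    exact Finset.sum_congr rfl fun j _ => trace_mul_vecMulVec u _
  calc ∫ a, Real.exp (-(u * ∑ j, vecMulVec (ξ j a) (ξ j a)).trace) ∂P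
      = ∫ a, ∏ j, φ (ξ j a) ∂P := by
        congr 1; ext a
        rw [htr1 a, ← Real.exp_sum]
        congr 1
        rw [← Finset.sum_neg_distrib]
    _ = ∏ j, ∫ a, φ (ξ j a) ∂P := by
        exact indep_prod_integral P (fun j a => φ (ξ j a))
          (hindep.comp (fun _ => φ) fun _ => hφmeas)
          (fun j => hφmeas.comp (hmeas j)) (fun j a => hφbd _) Finset.univ
    _ = ∏ j : Fin k, ((1 + ((2 : ℝ) • S) * u).det ^ (-(1:ℝ)/2) *
          Real.exp (-(m j ⬝ᵥ (u * (1 + ((2 : ℝ) • S) * u)⁻¹) *ᵥ m j))) := by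
        refine Finset.prod_congr rfl fun j _ => ?_
        rw [← integral_map (hmeas j).aemeasurable hφmeas.aestronglyMeasurable, hlaw j,
          mvGaussian_exp_quad (m j) hS hu]
    _ = (1 + ((2 : ℝ) • S) * u).det ^ (-(k : ℝ) / 2) *
        Real.exp (-(u * (1 + ((2 : ℝ) • S) * u)⁻¹ * ∑ j, vecMulVec (m j) (m j)).trace) := by
        rw [Finset.prod_mul_distrib, Finset.prod_const, Finset.card_univ, Fintype.card_fin]
        congr 1
        · rw [← Real.rpow_natCast ((1 + ((2 : ℝ) • S) * u).det ^ (-(1:ℝ)/2)) k,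
            ← Real.rpow_mul hMdetpos.le]
          congr 1
          ring
        · rw [← Real.exp_sum]
          congr 1
          rw [Matrix.mul_sum, Matrix.trace_sum, ← Finset.sum_neg_distrib]
          exact Finset.sum_congr rfl fun j _ => by rw [trace_mul_vecMulVec]
end

section
/- Let p ≥ 0 and let ω, σ be positive semidefinite real symmetric d×d matrices. Any probability measure μ on the space of real symmetric d×d matrices satisfying ∫ exp(-tr(u ξ)) dμ(ξ) = det(I + σu)^{-p} · exp(-tr(u (I + σu)^{-1} ω)) for all positive semidefinite u is supported on the cone of positive semidefinite matrices, i.e. μ assigns full mass to the positive semidefinite matrices. -/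
open MeasureTheory Matrix

instance matrixMeasurableSpace (d : ℕ) : MeasurableSpace (Matrix (Fin d) (Fin d) ℝ) :=
  inferInstanceAs (MeasurableSpace (Fin d → Fin d → ℝ))

lemma quad_meas {d : ℕ} (v : Fin d → ℝ) :
    Measurable fun A : Matrix (Fin d) (Fin d) ℝ => v ⬝ᵥ A *ᵥ v := by
  simp only [dotProduct, Matrix.mulVec, dotProduct]
  refine Finset.measurable_sum _ fun i _ => Measurable.const_mul ?_ _
  exact Finset.measurable_sum _ fun j _ =>
    (((measurable_pi_apply i).comp measurable_id).eval (a := j)).mul_const _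

lemma trace_smul_vecMulVec {d : ℕ} (t : ℝ) (v : Fin d → ℝ) (A : Matrix (Fin d) (Fin d) ℝ) :
    ((t • vecMulVec v v) * A).trace = t * (v ⬝ᵥ A *ᵥ v) := by
  simp only [Matrix.trace, Matrix.diag, Matrix.mul_apply, Matrix.smul_apply, vecMulVec_apply,
    dotProduct, Matrix.mulVec, smul_eq_mul, Finset.mul_sum]
  rw [Finset.sum_comm]
  congr 1; ext i; congr 1; ext j; ring

lemma vecMulVec_posSemidef {d : ℕ} (t : ℝ) (ht : 0 ≤ t) (v : Fin d → ℝ) :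
    (t • vecMulVec v v : Matrix (Fin d) (Fin d) ℝ).PosSemidef := by
  refine Matrix.PosSemidef.of_dotProduct_mulVec_nonneg ?_ ?_
  · ext i j
    simp [Matrix.conjTranspose_apply, vecMulVec_apply, mul_comm]
  · intro x
    have : (star x) ⬝ᵥ ((t • vecMulVec v v : Matrix (Fin d) (Fin d) ℝ) *ᵥ x)
        = t * (v ⬝ᵥ x) * (v ⬝ᵥ x) := by
      simp only [star_trivial, dotProduct, Matrix.mulVec, Matrix.smul_apply, vecMulVec_apply,
        smul_eq_mul, Finset.mul_sum, Finset.sum_mul]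
      rw [Finset.sum_comm]
      congr 1; ext i; congr 1; ext j; ring
    rw [this]
    rw [mul_assoc]
    exact mul_nonneg ht (mul_self_nonneg _)

lemma sigma_mul_u {d : ℕ} (t : ℝ) (v : Fin d → ℝ) (σ : Matrix (Fin d) (Fin d) ℝ) :
    σ * (t • vecMulVec v v) = vecMulVec (t • (σ *ᵥ v)) v := by
  ext i j
  simp only [Matrix.mul_apply, Matrix.smul_apply, vecMulVec_apply, smul_eq_mul, Pi.smul_apply,
    Matrix.mulVec, dotProduct, Finset.mul_sum, Finset.sum_mul]
  congr 1; ext k; ring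

lemma det_one_add_vecMulVec {d : ℕ} (a b : Fin d → ℝ) :
    (1 + vecMulVec a b).det = 1 + b ⬝ᵥ a := by
  rw [vecMulVec_eq Unit, Matrix.det_one_add_replicateCol_mul_replicateRow]

lemma u_sigma_u {d : ℕ} (t : ℝ) (v : Fin d → ℝ) (σ : Matrix (Fin d) (Fin d) ℝ) :
    (t • vecMulVec v v) * σ * (t • vecMulVec v v)
      = (t * (v ⬝ᵥ σ *ᵥ v)) • (t • vecMulVec v v) := by
  ext i j
  simp only [Matrix.mul_apply, Matrix.smul_apply, vecMulVec_apply, smul_eq_mul,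
    Matrix.mulVec, dotProduct, Finset.mul_sum, Finset.sum_mul]
  rw [Finset.sum_comm]
  congr 1; ext k; congr 1; ext l; ring

lemma key_inverse {d : ℕ} (u σ : Matrix (Fin d) (Fin d) ℝ) (s : ℝ)
    (hs : (1 : ℝ) + s ≠ 0) (hdet : (1 + σ * u).det = 1 + s) (h1 : u * σ * u = s • u) :
    u * (1 + σ * u)⁻¹ = (1 + s)⁻¹ • u := by
  have hunit : IsUnit (1 + σ * u).det := by rw [hdet]; exact Ne.isUnit hs
  have key : ((1 + s)⁻¹ • u) * (1 + σ * u) = u := by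
    have h1' : u * (σ * u) = s • u := by rw [← Matrix.mul_assoc]; exact h1
    rw [Matrix.smul_mul, Matrix.mul_add, Matrix.mul_one, h1', smul_add, smul_smul,
      ← add_smul, ← mul_one_add, inv_mul_cancel₀ hs, one_smul]
  calc u * (1 + σ * u)⁻¹ = (((1 + s)⁻¹ • u) * (1 + σ * u)) * (1 + σ * u)⁻¹ := by rw [key]
    _ = (1 + s)⁻¹ • u := Matrix.mul_nonsing_inv_cancel_right _ _ hunit

lemma quad_zero_measure {d : ℕ} (p : ℝ) (hp : 0 ≤ p)
    (ω σ : Matrix (Fin d) (Fin d) ℝ) (hω : ω.PosSemidef) (hσ : σ.PosSemidef)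
    (μ : Measure (Matrix (Fin d) (Fin d) ℝ)) [IsProbabilityMeasure μ]
    (hlaplace : ∀ u : Matrix (Fin d) (Fin d) ℝ, u.PosSemidef →
      ∫ ξ, Real.exp (-(u * ξ).trace) ∂μ =
        (1 + σ * u).det ^ (-p) * Real.exp (-(u * (1 + σ * u)⁻¹ * ω).trace))
    (v : Fin d → ℝ) (ε : ℝ) (hε : 0 < ε) :
    μ {A | v ⬝ᵥ A *ᵥ v ≤ -ε} = 0 := by
  by_contra hS
  set S := {A : Matrix (Fin d) (Fin d) ℝ | v ⬝ᵥ A *ᵥ v ≤ -ε} with hSdef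
  have hSmeas : MeasurableSet S := (quad_meas v) measurableSet_Iic
  have hfin : μ S ≠ ⊤ := (measure_lt_top μ S).ne
  set c₀ : ℝ := (μ S).toReal with hc₀
  have hc₀pos : 0 < c₀ := ENNReal.toReal_pos hS hfin
  have hc₀le : c₀ ≤ 1 := by
    rw [hc₀, ← ENNReal.toReal_one]
    exact ENNReal.toReal_mono ENNReal.one_ne_top prob_le_one
  -- choose t
  set t : ℝ := (Real.log (1 / c₀) + 1) / ε with ht
  have hlog : 0 ≤ Real.log (1 / c₀) := Real.log_nonneg (by
    rw [le_div_iff₀ hc₀pos, one_mul]; exact hc₀le)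
  have htpos : 0 < t := div_pos (by linarith) hε
  have htε : t * ε = Real.log (1 / c₀) + 1 := div_mul_cancel₀ _ hε.ne'
  have hexp : Real.exp (t * ε) * c₀ = Real.exp 1 := by
    rw [htε, Real.exp_add, Real.exp_log (by positivity), one_div]
    field_simp
  -- the PSD test matrix
  set u : Matrix (Fin d) (Fin d) ℝ := t • vecMulVec v v with hudef
  have hu : u.PosSemidef := vecMulVec_posSemidef t htpos.le v
  set s : ℝ := t * (v ⬝ᵥ σ *ᵥ v) with hs
  have hqσ : 0 ≤ v ⬝ᵥ σ *ᵥ v := by simpa using hσ.dotProduct_mulVec_nonneg v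
  have hsnn : 0 ≤ s := mul_nonneg htpos.le hqσ
  have hdet : (1 + σ * u).det = 1 + s := by
    rw [hudef, sigma_mul_u, det_one_add_vecMulVec]
    simp only [dotProduct_smul, hs, smul_eq_mul]
  have hsne : (1 : ℝ) + s ≠ 0 := by positivity
  have hinv : u * (1 + σ * u)⁻¹ = (1 + s)⁻¹ • u :=
    key_inverse u σ s hsne hdet (by rw [hudef, hs]; exact u_sigma_u t v σ)
  -- RHS bounds
  have htr : (u * (1 + σ * u)⁻¹ * ω).trace = (1 + s)⁻¹ * (t * (v ⬝ᵥ ω *ᵥ v)) := by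
    rw [hinv, Matrix.smul_mul, Matrix.trace_smul, hudef, trace_smul_vecMulVec, smul_eq_mul]
  have hqω : 0 ≤ v ⬝ᵥ ω *ᵥ v := by simpa using hω.dotProduct_mulVec_nonneg v
  have htrnn : 0 ≤ (u * (1 + σ * u)⁻¹ * ω).trace := by
    rw [htr]; positivity
  have hRpos : 0 < (1 + σ * u).det ^ (-p) * Real.exp (-(u * (1 + σ * u)⁻¹ * ω).trace) := by
    apply mul_pos (Real.rpow_pos_of_pos (by rw [hdet]; positivity) _) (Real.exp_pos _)
  have hRle : (1 + σ * u).det ^ (-p) * Real.exp (-(u * (1 + σ * u)⁻¹ * ω).trace) ≤ 1 := by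
    apply mul_le_one₀
    · apply Real.rpow_le_one_of_one_le_of_nonpos
      · rw [hdet]; linarith
      · linarith
    · exact (Real.exp_pos _).le
    · exact Real.exp_le_one_iff.2 (by linarith)
  have hL := hlaplace u hu
  set f : Matrix (Fin d) (Fin d) ℝ → ℝ := fun ξ => Real.exp (-(u * ξ).trace) with hf
  have hfeq : ∀ ξ, f ξ = Real.exp (-(t * (v ⬝ᵥ ξ *ᵥ v))) := by
    intro ξ; rw [hf]; simp only; rw [hudef, trace_smul_vecMulVec]
  by_cases hint : Integrable f μ
  · have hnn : 0 ≤ᵐ[μ] f := Filter.Eventually.of_forall fun ξ => (Real.exp_pos _).le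
    have h1 : ∫ ξ, f ξ ∂μ ≤ 1 := hL.le.trans hRle
    have h2 : Real.exp (t * ε) * c₀ ≤ ∫ ξ in S, f ξ ∂μ := by
      rw [hc₀]
      apply setIntegral_ge_of_const_le_real hSmeas hfin
      · intro ξ hξ
        rw [hfeq]
        apply Real.exp_le_exp.2
        have : v ⬝ᵥ ξ *ᵥ v ≤ -ε := hξ
        nlinarith
      · exact hint.integrableOn
    have h3 : ∫ ξ in S, f ξ ∂μ ≤ ∫ ξ, f ξ ∂μ := setIntegral_le_integral hint hnn
    have := Real.exp_one_gt_d9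
    rw [hexp] at h2
    linarith
  · rw [integral_undef hint] at hL
    exact absurd hL.symm (ne_of_gt hRpos)

/-- Any probability measure on the real symmetric `d×d` matrices whose
Laplace transform is that of the Wishart distribution `Γ(p, ω; σ)` gives full mass to the
cone of positive semidefinite matrices. -/
theorem wishart_supported_on_posSemidef {d : ℕ} (p : ℝ) (hp : 0 ≤ p)
    (ω σ : Matrix (Fin d) (Fin d) ℝ) (hω : ω.PosSemidef) (hσ : σ.PosSemidef)
    (μ : Measure (Matrix (Fin d) (Fin d) ℝ)) [IsProbabilityMeasure μ]
    (hsymm : μ {A | A.IsSymm} = 1)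
    (hlaplace : ∀ u : Matrix (Fin d) (Fin d) ℝ, u.PosSemidef →
      ∫ ξ, Real.exp (-(u * ξ).trace) ∂μ =
        (1 + σ * u).det ^ (-p) * Real.exp (-(u * (1 + σ * u)⁻¹ * ω).trace)) :
    μ {A | A.PosSemidef} = 1 := by
  -- for each real vector, the quadratic form is a.e. nonnegative
  have hv : ∀ v : Fin d → ℝ, μ {A | v ⬝ᵥ A *ᵥ v < 0} = 0 := by
    intro v
    have hcover : {A : Matrix (Fin d) (Fin d) ℝ | v ⬝ᵥ A *ᵥ v < 0}
        ⊆ ⋃ n : ℕ, {A | v ⬝ᵥ A *ᵥ v ≤ -(1 / (n + 1))} := by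
      intro A hA
      have hA' : v ⬝ᵥ A *ᵥ v < 0 := hA
      obtain ⟨n, hn⟩ := exists_nat_one_div_lt (neg_pos.2 hA')
      exact Set.mem_iUnion.2 ⟨n, by simp only [Set.mem_setOf_eq]; linarith⟩
    refine measure_mono_null hcover (measure_iUnion_null fun n => ?_)
    exact quad_zero_measure p hp ω σ hω hσ μ hlaplace v (1 / (n + 1)) (by positivity)
  -- the bad set is covered by rational vectors
  have hsub : {A : Matrix (Fin d) (Fin d) ℝ | A.IsSymm} \ {A | A.PosSemidef}
      ⊆ ⋃ v : Fin d → ℚ, {A | (fun i => ((v i : ℝ))) ⬝ᵥ A *ᵥ (fun i => ((v i : ℝ))) < 0} := by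
    rintro A ⟨hAs, hAnot⟩
    have hherm : A.IsHermitian := by
      rw [Matrix.IsHermitian]
      ext i j
      simpa [Matrix.conjTranspose_apply] using (congrFun (congrFun hAs j) i).symm
    have : ¬ ∀ x : Fin d → ℝ, 0 ≤ x ⬝ᵥ A *ᵥ x := by
      intro hx
      exact hAnot (Matrix.PosSemidef.of_dotProduct_mulVec_nonneg hherm fun x => by simpa using hx x)
    push_neg at this
    obtain ⟨x, hx⟩ := this
    -- find a rational vector in the open set
    have hcont : Continuous fun y : Fin d → ℝ => y ⬝ᵥ A *ᵥ y := by
      unfold dotProduct Matrix.mulVec dotProduct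
      exact continuous_finset_sum _ fun i _ => (continuous_apply i).mul
        (continuous_finset_sum _ fun j _ => continuous_const.mul (continuous_apply j))
    have hopen : IsOpen {y : Fin d → ℝ | y ⬝ᵥ A *ᵥ y < 0} := isOpen_lt hcont continuous_const
    have hdense : Dense (Set.pi Set.univ fun _ : Fin d => Set.range ((↑) : ℚ → ℝ)) :=
      dense_pi Set.univ fun i _ => Rat.denseRange_cast
    obtain ⟨y, hyD, hyU⟩ := hdense.exists_mem_open hopen ⟨x, hx⟩
    choose q hq using fun i => hyD i (Set.mem_univ i)
    refine Set.mem_iUnion.2 ⟨q, ?_⟩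
    have hyq : (fun i => ((q i : ℝ))) = y := funext hq
    simpa [hyq] using hyU
  have hbad : μ ({A : Matrix (Fin d) (Fin d) ℝ | A.IsSymm} \ {A | A.PosSemidef}) = 0 :=
    measure_mono_null hsub (measure_iUnion_null fun v => hv _)
  have h1 : (1 : ENNReal) ≤ μ {A | A.PosSemidef} := by
    calc (1 : ENNReal) = μ {A | A.IsSymm} := hsymm.symm
      _ ≤ μ ({A : Matrix (Fin d) (Fin d) ℝ | A.PosSemidef}
            ∪ ({A | A.IsSymm} \ {A | A.PosSemidef})) := by
          apply measure_mono
          intro A hA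
          by_cases hA' : A.PosSemidef
          · exact Or.inl hA'
          · exact Or.inr ⟨hA, hA'⟩
      _ ≤ μ {A | A.PosSemidef} + μ ({A : Matrix (Fin d) (Fin d) ℝ | A.IsSymm}
            \ {A | A.PosSemidef}) := measure_union_le _ _
      _ = μ {A | A.PosSemidef} := by rw [hbad, add_zero]
  exact le_antisymm prob_le_one h1
end

section
/- Let p ≥ 0 and ω be a positive semidefinite real symmetric d×d matrix, and let X be a random variable with values in the real symmetric d×d matrices such that E[exp(-tr(u X))] = det(I + u)^{-p} · exp(-tr(u (I + u)^{-1} ω)) for all positive semidefinite u. Let q be positive semidefinite with σ := q². Then the random variable q X q satisfies E[exp(-tr(u · qXq))] = det(I + σu)^{-p} · exp(-tr(u (I + σu)^{-1} qωq)) for all positive semidefinite u; that is, q X q is distributed according to Γ(p, qωq; σ). -/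
open MeasureTheory Matrix

/-- If `X` is a random symmetric matrix with the Laplace transform of
`Γ(p, ω; I)` and `q` is positive semidefinite with `σ = q²`, then `q X q` has the Laplace
transform of `Γ(p, q ω q; σ)`. -/
theorem wishart_quadratic_transformation
    {Ω : Type*} [MeasurableSpace Ω] (P : Measure Ω) [IsProbabilityMeasure P]
    {d : ℕ} (p : ℝ) (hp : 0 ≤ p) (ω : Matrix (Fin d) (Fin d) ℝ) (hω : ω.PosSemidef)
    (X : Ω → Matrix (Fin d) (Fin d) ℝ) (hXsymm : ∀ a, (X a).IsSymm)
    (hlaplace : ∀ u : Matrix (Fin d) (Fin d) ℝ, u.PosSemidef →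
      ∫ a, Real.exp (-(u * X a).trace) ∂P =
        (1 + u).det ^ (-p) * Real.exp (-(u * (1 + u)⁻¹ * ω).trace))
    (q : Matrix (Fin d) (Fin d) ℝ) (hq : q.PosSemidef)
    (u : Matrix (Fin d) (Fin d) ℝ) (hu : u.PosSemidef) :
    ∫ a, Real.exp (-(u * (q * X a * q)).trace) ∂P =
      (1 + (q * q) * u).det ^ (-p) *
        Real.exp (-(u * (1 + (q * q) * u)⁻¹ * (q * ω * q)).trace) := by
  have hqH : qᴴ = q := hq.isHermitian
  -- q u q is positive semidefinite
  have hquq : (q * u * q).PosSemidef := by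
    have := hu.mul_mul_conjTranspose_same q
    rwa [hqH] at this
  -- determinants agree
  have hdet : (1 + q * q * u).det = (1 + q * u * q).det := by
    calc (1 + q * q * u).det = (1 + q * (q * u)).det := by rw [mul_assoc]
      _ = (1 + (q * u) * q).det := by
          rw [Matrix.det_one_add_mul_comm]
      _ = (1 + q * u * q).det := rfl
  -- 1 + quq is positive definite, hence invertible
  have hpd : (1 + q * u * q).PosDef := Matrix.PosDef.one.add_posSemidef hquq
  have h1 : IsUnit (1 + q * u * q) := hpd.isUnit
  have h2 : IsUnit (1 + q * q * u) := by
    rw [Matrix.isUnit_iff_isUnit_det, hdet, ← Matrix.isUnit_iff_isUnit_det]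
    exact h1
  have : Invertible (1 + q * u * q) := h1.invertible
  have : Invertible (1 + q * q * u) := h2.invertible
  -- key inverse identity
  have key : (1 + q * q * u) * q = q * (1 + q * u * q) := by noncomm_ring
  have hswap : (1 + q * q * u)⁻¹ * q = q * (1 + q * u * q)⁻¹ := by
    rw [Matrix.inv_mul_eq_iff_eq_mul_of_invertible, ← Matrix.mul_assoc, key,
      Matrix.mul_inv_cancel_right_of_invertible]
  -- traces in the exponent agree
  have htr : (u * (1 + q * q * u)⁻¹ * (q * ω * q)).trace
      = (q * u * q * (1 + q * u * q)⁻¹ * ω).trace := by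
    have e1 : u * (1 + q * q * u)⁻¹ * (q * ω * q)
        = u * ((1 + q * q * u)⁻¹ * q) * (ω * q) := by noncomm_ring
    rw [e1, hswap,
      show u * (q * (1 + q * u * q)⁻¹) * (ω * q)
        = (u * q * (1 + q * u * q)⁻¹ * ω) * q by noncomm_ring,
      Matrix.trace_mul_comm]
    congr 1
    noncomm_ring
  -- traces inside the integral agree
  have hint : ∀ a, (u * (q * X a * q)).trace = (q * u * q * X a).trace := by
    intro a
    rw [show u * (q * X a * q) = (u * q * X a) * q by noncomm_ring,
      Matrix.trace_mul_comm]
    congr 1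
    noncomm_ring
  simp only [hint]
  rw [hlaplace (q * u * q) hquq, hdet, htr]
end
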